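/- Let X and Y be real normed linear spaces and T a bounded linear operator from X to Y with operator norm 1. If there exists ε ∈ [0,1) such that T is ε-approximately orthogonality reversing in the sense of Dragomir (ε-DAOR), then T is injective. -/

import Mathlib

/-- Birkhoff–James orthogonality: `x ⊥_B y` iff `‖x + λ • y‖ ≥ ‖x‖` for every real `λ`. -/
def BJOrth {E : Type*} [NormedAddCommGroup E] [NormedSpace ℝ E] (x y : E) : Prop :=
  ∀ lam : ℝ, ‖x‖ ≤ ‖x + lam • y‖

/-- `x` is a left-symmetric point: `x ⊥_B y` implies `y ⊥_B x` for all `y`. -/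
def LeftSymmetricPt {E : Type*} [NormedAddCommGroup E] [NormedSpace ℝ E] (x : E) : Prop :=
  ∀ y : E, BJOrth x y → BJOrth y x

/-- `x` is a right-symmetric point: `y ⊥_B x` implies `x ⊥_B y` for all `y`. -/
def RightSymmetricPt {E : Type*} [NormedAddCommGroup E] [NormedSpace ℝ E] (x : E) : Prop :=
  ∀ y : E, BJOrth y x → BJOrth x y

/-- A nonzero `x` is a smooth point if there is exactly one norm-one continuous linear
functional `f` with `f x = ‖x‖`. -/
def SmoothPoint {E : Type*} [NormedAddCommGroup E] [NormedSpace ℝ E] (x : E) : Prop :=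
  ∃! f : E →L[ℝ] ℝ, ‖f‖ = 1 ∧ f x = ‖x‖

/-- A normed space is reflexive if the canonical embedding into the double dual is onto. -/
def ReflexiveSpace (E : Type*) [NormedAddCommGroup E] [NormedSpace ℝ E] : Prop :=
  Function.Surjective (NormedSpace.inclusionInDoubleDual ℝ E)

/-- `T` (a compact operator) is a right-symmetric point of the space of compact operators
(with the operator norm): `A ⊥_B T` implies `T ⊥_B A` for every compact operator `A`. -/
def RightSymmetricCompactOp {X Y : Type*} [NormedAddCommGroup X] [NormedSpace ℝ X]
    [NormedAddCommGroup Y] [NormedSpace ℝ Y] (T : X →L[ℝ] Y) : Prop :=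
  ∀ A : X →L[ℝ] Y, IsCompactOperator A → BJOrth A T → BJOrth T A

/-- `T` is left orthogonality preserving at `x`: `x ⊥_B y` implies `T x ⊥_B T y`. -/
def LeftOPAt {X Y : Type*} [NormedAddCommGroup X] [NormedSpace ℝ X]
    [NormedAddCommGroup Y] [NormedSpace ℝ Y] (T : X →L[ℝ] Y) (x : X) : Prop :=
  ∀ y : X, BJOrth x y → BJOrth (T x) (T y)

/-- Approximate Birkhoff–James orthogonality in the sense of Dragomir–Chmieliński:
`x ⊥_D^ε y` iff `‖x + λ • y‖ ≥ √(1 - ε²) * ‖x‖` for every real `λ`. -/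
def ApproxOrthD {E : Type*} [NormedAddCommGroup E] [NormedSpace ℝ E]
    (ε : ℝ) (x y : E) : Prop :=
  ∀ lam : ℝ, Real.sqrt (1 - ε ^ 2) * ‖x‖ ≤ ‖x + lam • y‖

/-- Approximate Birkhoff–James orthogonality in the sense of Chmieliński:
`x ⊥_B^ε y` iff `‖x + λ • y‖² ≥ ‖x‖² - 2ε‖x‖‖λ • y‖` for every real `λ`. -/
def ApproxOrthC {E : Type*} [NormedAddCommGroup E] [NormedSpace ℝ E]
    (ε : ℝ) (x y : E) : Prop :=
  ∀ lam : ℝ, ‖x‖ ^ 2 - 2 * ε * ‖x‖ * ‖lam • y‖ ≤ ‖x + lam • y‖ ^ 2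

/-- A norm-one bounded linear operator `T : X → Y` that is `ε`-approximately
orthogonality reversing in the sense of Dragomir for some `ε ∈ [0,1)` is injective. -/
theorem injective_of_DAOR {X Y : Type*} [NormedAddCommGroup X] [NormedSpace ℝ X]
    [NormedAddCommGroup Y] [NormedSpace ℝ Y]
    (T : X →L[ℝ] Y) (hT : ‖T‖ = 1)
    (h : ∃ ε : ℝ, 0 ≤ ε ∧ ε < 1 ∧ ∀ x y : X, BJOrth x y → ApproxOrthD ε (T y) (T x)) :
    Function.Injective T := by
  obtain ⟨ε, hε0, hε1, hD⟩ := h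
  have hc : 0 < Real.sqrt (1 - ε ^ 2) := Real.sqrt_pos.2 (by nlinarith)
  intro a b hab
  by_contra hne
  set x₀ := a - b with hx₀
  have hx₀ne : x₀ ≠ 0 := sub_ne_zero.2 hne
  have hTx₀ : T x₀ = 0 := by simp [hx₀, map_sub, hab]
  have hTne : ∃ y : X, T y ≠ 0 := by
    by_contra hy
    push_neg at hy
    have hT0 : T = 0 := ContinuousLinearMap.ext fun z => by simp [hy z]
    rw [hT0] at hT
    simp at hT
  obtain ⟨y, hTy⟩ := hTne
  have hy0 : (0:ℝ) < ‖y‖ := norm_pos_iff.2 fun h0 => hTy (by simp [h0])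
  have hx0pos : (0:ℝ) < ‖x₀‖ := norm_pos_iff.2 hx₀ne
  have key : ∀ t : ℝ, 0 < t → ‖x₀‖ ≤ 2 * t * ‖y‖ := by
    intro t ht
    set u := x₀ + t • y with hu
    have hTu : T u = t • T y := by simp [hu, hTx₀]
    have hune : u ≠ 0 := by
      intro h0
      apply hTy
      have : t • T y = 0 := by rw [← hTu, h0, map_zero]
      rcases smul_eq_zero.1 this with h | h
      · exact absurd h (ne_of_gt ht)
      · exact h
    obtain ⟨f, hf1, hfu⟩ := exists_dual_vector ℝ u (norm_ne_zero_iff.2 hune)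
    have hfu' : f u = ‖u‖ := hfu
    set v := f y • x₀ - f x₀ • y with hv
    have hfv : f v = 0 := by
      simp [hv, map_sub, map_smul, smul_eq_mul]
      ring
    have hfle : ∀ z : X, f z ≤ ‖z‖ := by
      intro z
      calc f z ≤ |f z| := le_abs_self _
        _ = ‖f z‖ := (Real.norm_eq_abs _).symm
        _ ≤ ‖f‖ * ‖z‖ := f.le_opNorm z
        _ = ‖z‖ := by rw [hf1, one_mul]
    have hBJ : BJOrth u v := by
      intro lam
      calc ‖u‖ = f u := hfu'.symm
        _ = f (u + lam • v) := by simp [map_add, map_smul, hfv]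
        _ ≤ ‖u + lam • v‖ := hfle _
    have happ := hD u v hBJ
    have hTv : T v = -(f x₀ • T y) := by simp [hv, map_sub, map_smul, hTx₀]
    have h0 := happ (f x₀ / t)
    rw [hTv, hTu] at h0
    have hz : -(f x₀ • T y) + (f x₀ / t) • t • T y = 0 := by
      rw [smul_smul, div_mul_cancel₀ _ (ne_of_gt ht)]
      simp
    rw [hz] at h0
    simp only [norm_zero, norm_neg, norm_smul] at h0
    have hfx0 : f x₀ = 0 := by
      by_contra hfx
      have h1 : 0 < ‖f x₀‖ := norm_pos_iff.2 hfx
      have h2 : 0 < ‖T y‖ := norm_pos_iff.2 hTy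
      nlinarith [mul_pos hc (mul_pos h1 h2)]
    have hub : ‖u‖ ≤ t * ‖y‖ := by
      calc ‖u‖ = f u := hfu'.symm
        _ = f (u - x₀) := by simp [map_sub, hfx0]
        _ ≤ ‖u - x₀‖ := hfle _
        _ = t * ‖y‖ := by
            simp [hu, norm_smul, abs_of_pos ht]
    calc ‖x₀‖ = ‖u - t • y‖ := by simp [hu]
      _ ≤ ‖u‖ + ‖t • y‖ := norm_sub_le _ _
      _ ≤ t * ‖y‖ + t * ‖y‖ := by
          rw [norm_smul, Real.norm_eq_abs, abs_of_pos ht]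
          exact add_le_add hub le_rfl
      _ = 2 * t * ‖y‖ := by ring
  have := key (‖x₀‖ / (4 * ‖y‖)) (by positivity)
  have heq : 2 * (‖x₀‖ / (4 * ‖y‖)) * ‖y‖ = ‖x₀‖ / 2 := by
    field_simp
    ring
  rw [heq] at this
  linarith
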